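/- For sequences θ⁽¹⁾, θ⁽²⁾, θ⁽³⁾ ∈ Θ (strictly increasing real sequences indexed by ℤ, unbounded in both directions), define θ ε θ' to mean there exist nondecreasing representatives γ, γ' (sequences whose range equals the range of θ, θ' respectively, with finite maximal multiplicity) such that sup_i |γᵢ − γ'ᵢ| < ε. Then θ⁽¹⁾ ε₁ θ⁽²⁾ and θ⁽²⁾ ε₂ θ⁽³⁾ imply θ⁽¹⁾ (ε₁+ε₂) θ⁽³⁾. -/

import Mathlib

open Filter

/-- θ belongs to Θ: strictly increasing, unbounded in both directions. -/
def InTheta (θ : ℤ → ℝ) : Prop :=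
  StrictMono θ ∧ Tendsto θ atTop atTop ∧ Tendsto θ atBot atBot

/-- γ is a representative of θ: nondecreasing, same range, finite maximal
multiplicity. -/
def IsRepr (γ θ : ℤ → ℝ) : Prop :=
  Monotone γ ∧ Set.range γ = Set.range θ ∧
    ∃ m₀ : ℕ, ∀ x : ℝ, {k : ℤ | γ k = x}.Finite ∧ {k : ℤ | γ k = x}.ncard ≤ m₀

/-- ε-equivalence of sequences: some representatives are within sup-distance < ε. -/
def SeqEquiv (θ θ' : ℤ → ℝ) (ε : ℝ) : Prop :=
  ∃ γ γ' : ℤ → ℝ, IsRepr γ θ ∧ IsRepr γ' θ' ∧ ∃ c : ℝ, c < ε ∧ ∀ i, |γ i - γ' i| ≤ c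

namespace SeqTri

/-- Fibers of a monotone function are intervals. -/
lemma fiber_eq_Icc {γ : ℤ → ℝ} (hγ : Monotone γ) {x : ℝ}
    (hfin : {k : ℤ | γ k = x}.Finite) (hne : {k : ℤ | γ k = x}.Nonempty) :
    {k : ℤ | γ k = x} = Set.Icc (sInf {k : ℤ | γ k = x}) (sSup {k : ℤ | γ k = x}) := by
  have h1 := hne.csInf_mem hfin
  have h2 := hne.csSup_mem hfin
  ext k
  simp only [Set.mem_setOf_eq, Set.mem_Icc]
  constructor
  · intro hk
    exact ⟨csInf_le hfin.bddBelow hk, le_csSup hfin.bddAbove hk⟩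
  · rintro ⟨h3, h4⟩
    have l1 := hγ h3
    have l2 := hγ h4
    simp only [Set.mem_setOf_eq] at h1 h2
    rw [h1] at l1; rw [h2] at l2
    exact le_antisymm l2 l1

lemma ncard_Icc (a b : ℤ) : (Set.Icc a b).ncard = (b + 1 - a).toNat := by
  rw [← Finset.coe_Icc, Set.ncard_coe_finset, Int.card_Icc]

/-- The key reindexing construction: if ρ's fibers are at least as wide as γ's
fibers over each common value, there is a monotone surjection u with γ ∘ u = ρ. -/
lemma exists_reindex (γ ρ : ℤ → ℝ) (hγ : Monotone γ) (hρ : Monotone ρ)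
    (hrange : Set.range ρ = Set.range γ)
    (hγfin : ∀ x, {k : ℤ | γ k = x}.Finite)
    (hρfin : ∀ x, {k : ℤ | ρ k = x}.Finite)
    (hspread : ∀ j : ℤ,
      sSup {k : ℤ | γ k = ρ j} - sInf {k : ℤ | γ k = ρ j}
        ≤ sSup {k : ℤ | ρ k = ρ j} - sInf {k : ℤ | ρ k = ρ j}) :
    ∃ u : ℤ → ℤ, Monotone u ∧ Function.Surjective u ∧ ∀ j, γ (u j) = ρ j := by
  set A : ℤ → Set ℤ := fun j => {k | γ k = ρ j} with hA
  set F : ℤ → Set ℤ := fun j => {k | ρ k = ρ j} with hF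
  have hAne : ∀ j, (A j).Nonempty := by
    intro j
    have : ρ j ∈ Set.range γ := hrange ▸ Set.mem_range_self j
    obtain ⟨k, hk⟩ := this
    exact ⟨k, hk⟩
  have hFne : ∀ j, (F j).Nonempty := fun j => ⟨j, rfl⟩
  have hAfin : ∀ j, (A j).Finite := fun j => hγfin _
  have hFfin : ∀ j, (F j).Finite := fun j => hρfin _
  set u : ℤ → ℤ := fun j => max (sInf (A j)) (sSup (A j) - (sSup (F j) - j)) with hu
  have hjF : ∀ j, j ≤ sSup (F j) := fun j => le_csSup (hFfin j).bddAbove (show j ∈ F j from rfl)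
  have huA : ∀ j, u j ∈ A j := by
    intro j
    have h1 : sInf (A j) ≤ u j := le_max_left _ _
    have h2 : u j ≤ sSup (A j) := by
      apply max_le (csInf_le_csSup (hAne j) (hAfin j).bddBelow (hAfin j).bddAbove)
      have := hjF j; omega
    have hIcc : A j = Set.Icc (sInf (A j)) (sSup (A j)) :=
      fiber_eq_Icc hγ (hAfin j) (hAne j)
    rw [hIcc]
    exact Set.mem_Icc.mpr ⟨h1, h2⟩
  have hcomm : ∀ j, γ (u j) = ρ j := fun j => huA j
  refine ⟨u, ?_, ?_, hcomm⟩
  · -- Monotone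
    intro j j' hjj'
    rcases eq_or_lt_of_le (hρ hjj') with heq | hlt
    · have hAeq : A j' = A j := by simp only [hA, ← heq]
      have hFeq : F j' = F j := by simp only [hF, ← heq]
      simp only [hu, hAeq, hFeq]
      exact max_le_max le_rfl (by omega)
    · have h1 : u j ≤ sSup (A j) := by
        apply max_le (csInf_le_csSup (hAne j) (hAfin j).bddBelow (hAfin j).bddAbove)
        have := hjF j; omega
      have h2 : sSup (A j) < sInf (A j') := by
        have ha : γ (sSup (A j)) = ρ j := (hAne j).csSup_mem (hAfin j)
        have hb : γ (sInf (A j')) = ρ j' := (hAne j').csInf_mem (hAfin j')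
        exact hγ.reflect_lt (by rw [ha, hb]; exact hlt)
      have h3 : sInf (A j') ≤ u j' := le_max_left _ _
      omega
  · -- Surjective
    intro k
    have : γ k ∈ Set.range ρ := hrange ▸ Set.mem_range_self k
    obtain ⟨j₀, hj₀⟩ := this
    have hkA : k ∈ A j₀ := hj₀.symm
    set j : ℤ := sSup (F j₀) - (sSup (A j₀) - k) with hj
    have hk1 : k ≤ sSup (A j₀) := le_csSup (hAfin j₀).bddAbove hkA
    have hk2 : sInf (A j₀) ≤ k := csInf_le (hAfin j₀).bddBelow hkA
    have hjF₀ : j ∈ F j₀ := by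
      have hIccF : F j₀ = Set.Icc (sInf (F j₀)) (sSup (F j₀)) :=
        fiber_eq_Icc hρ (hρfin _) (hFne j₀)
      rw [hIccF]
      refine Set.mem_Icc.mpr ⟨?_, by omega⟩
      have hsp : sSup (A j₀) - sInf (A j₀) ≤ sSup (F j₀) - sInf (F j₀) := hspread j₀
      omega
    have hρj : ρ j = ρ j₀ := hjF₀
    have hAeq : A j = A j₀ := by simp only [hA, hρj]
    have hFeq : F j = F j₀ := by simp only [hF, hρj]
    refine ⟨j, ?_⟩
    simp only [hu, hAeq, hFeq]
    omega


/-- Fiber of the stretched sequence `k ↦ γ₂ (k / N)`. -/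
lemma rho_fiber_eq {γ₂ : ℤ → ℝ} (hmono : Monotone γ₂) {N : ℤ} (hN : 0 < N)
    (hfin : ∀ x, {k : ℤ | γ₂ k = x}.Finite) {s : ℝ} (hs : s ∈ Set.range γ₂) :
    {k : ℤ | γ₂ (k / N) = s} =
      Set.Icc (N * sInf {k : ℤ | γ₂ k = s}) (N * sSup {k : ℤ | γ₂ k = s} + (N - 1)) := by
  obtain ⟨k₀, hk₀⟩ := hs
  have hne : {k : ℤ | γ₂ k = s}.Nonempty := ⟨k₀, hk₀⟩
  have hIcc := fiber_eq_Icc hmono (hfin s) hne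
  set a := sInf {k : ℤ | γ₂ k = s} with ha
  set b := sSup {k : ℤ | γ₂ k = s} with hb
  ext k
  simp only [Set.mem_setOf_eq, Set.mem_Icc]
  have key : γ₂ (k / N) = s ↔ (a ≤ k / N ∧ k / N ≤ b) := by
    constructor
    · intro h
      have : k / N ∈ {k : ℤ | γ₂ k = s} := h
      rw [hIcc] at this
      exact Set.mem_Icc.mp this
    · intro ⟨h1, h2⟩
      have : k / N ∈ Set.Icc a b := Set.mem_Icc.mpr ⟨h1, h2⟩
      rw [← hIcc] at this
      exact this
  rw [key]
  have e1 : a ≤ k / N ↔ N * a ≤ k := by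
    rw [Int.le_ediv_iff_mul_le hN]; constructor <;> intro <;> linarith [mul_comm a N]
  have e2 : k / N ≤ b ↔ k ≤ N * b + (N - 1) := by
    constructor
    · intro h
      have : k / N < b + 1 := by omega
      have := (Int.ediv_lt_iff_lt_mul hN).mp this
      nlinarith
    · intro h
      have : k < (b + 1) * N := by nlinarith
      have := (Int.ediv_lt_iff_lt_mul hN).mpr this
      omega
  rw [e1, e2]

/-- Fibers of the stretched sequence are finite with controlled cardinality. -/
lemma rho_fiber_bound {γ₂ : ℤ → ℝ} (hmono : Monotone γ₂) {N : ℤ} (hN : 0 < N)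
    {m₀ : ℕ} (hfc : ∀ x, {k : ℤ | γ₂ k = x}.Finite ∧ {k : ℤ | γ₂ k = x}.ncard ≤ m₀)
    (x : ℝ) :
    {k : ℤ | γ₂ (k / N) = x}.Finite ∧ {k : ℤ | γ₂ (k / N) = x}.ncard ≤ (N * m₀).toNat := by
  have hfin : ∀ x, {k : ℤ | γ₂ k = x}.Finite := fun x => (hfc x).1
  by_cases hx : x ∈ Set.range γ₂
  · have heq := rho_fiber_eq hmono hN hfin hx
    set a := sInf {k : ℤ | γ₂ k = x} with ha
    set b := sSup {k : ℤ | γ₂ k = x} with hb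
    obtain ⟨k₀, hk₀⟩ := hx
    have hne : {k : ℤ | γ₂ k = x}.Nonempty := ⟨k₀, hk₀⟩
    have hab : a ≤ b := csInf_le_csSup hne (hfin x).bddBelow (hfin x).bddAbove
    have hcard : {k : ℤ | γ₂ k = x}.ncard = (b + 1 - a).toNat := by
      rw [fiber_eq_Icc hmono (hfin x) hne, ← ha, ← hb, ncard_Icc]
    have hba : b + 1 - a ≤ m₀ := by
      have := (hfc x).2
      rw [hcard] at this
      omega
    constructor
    · rw [heq]; exact Set.finite_Icc _ _
    · rw [heq, ncard_Icc]
      have : N * b + (N - 1) + 1 - N * a ≤ N * m₀ := by nlinarith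
      omega
  · have hempty : {k : ℤ | γ₂ (k / N) = x} = ∅ := by
      ext k
      simp only [Set.mem_setOf_eq, Set.mem_empty_iff_false, iff_false]
      intro h
      exact hx ⟨k / N, h⟩
    rw [hempty]
    simp

/-- Multiplicity bound for a composition `γ₁ ∘ u` when `g ∘ u = ρ`. -/
lemma comp_fiber_bound {γ₁ g ρ : ℤ → ℝ} {u : ℤ → ℤ}
    (hcomm : ∀ j, g (u j) = ρ j) {m₁ M : ℕ}
    (hγ₁fc : ∀ x, {k : ℤ | γ₁ k = x}.Finite ∧ {k : ℤ | γ₁ k = x}.ncard ≤ m₁)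
    (hρfc : ∀ x, {k : ℤ | ρ k = x}.Finite ∧ {k : ℤ | ρ k = x}.ncard ≤ M)
    (x : ℝ) :
    {j : ℤ | γ₁ (u j) = x}.Finite ∧ {j : ℤ | γ₁ (u j) = x}.ncard ≤ m₁ * M := by
  classical
  set T : Finset ℤ :=
    ((hγ₁fc x).1.toFinset).biUnion (fun k => ((hρfc (g k)).1).toFinset) with hT
  have hsub : {j : ℤ | γ₁ (u j) = x} ⊆ ↑T := by
    intro j hj
    simp only [Set.mem_setOf_eq] at hj
    simp only [hT, Finset.coe_biUnion, Set.mem_iUnion, Finset.mem_coe,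
      Set.Finite.mem_toFinset, Set.mem_setOf_eq]
    exact ⟨u j, hj, (hcomm j).symm⟩
  refine ⟨Set.Finite.subset T.finite_toSet hsub, ?_⟩
  have h1 : {j : ℤ | γ₁ (u j) = x}.ncard ≤ T.card := by
    rw [← Set.ncard_coe_finset]
    exact Set.ncard_le_ncard hsub T.finite_toSet
  have h2 : T.card ≤ m₁ * M := by
    calc T.card ≤ ∑ k ∈ (hγ₁fc x).1.toFinset, ((hρfc (g k)).1).toFinset.card :=
          Finset.card_biUnion_le
      _ ≤ (hγ₁fc x).1.toFinset.card * M := by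
          apply Finset.sum_le_card_nsmul
          intro k _
          rw [← Set.ncard_eq_toFinset_card _ ((hρfc (g k)).1)]
          exact (hρfc (g k)).2
      _ ≤ m₁ * M := by
          apply Nat.mul_le_mul_right
          rw [← Set.ncard_eq_toFinset_card _ ((hγ₁fc x).1)]
          exact (hγ₁fc x).2
  omega

end SeqTri

/-- Lemma 2: the triangle inequality for ε-equivalence of sequences. -/
theorem seqEquiv_triangle
    (θ₁ θ₂ θ₃ : ℤ → ℝ) (ε₁ ε₂ : ℝ)
    (h₁ : InTheta θ₁) (h₂ : InTheta θ₂) (h₃ : InTheta θ₃)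
    (h₁₂ : SeqEquiv θ₁ θ₂ ε₁) (h₂₃ : SeqEquiv θ₂ θ₃ ε₂) :
    SeqEquiv θ₁ θ₃ (ε₁ + ε₂) := by
  obtain ⟨γ₁, γ₂, ⟨hγ₁m, hγ₁r, m₁, hγ₁f⟩, ⟨hγ₂m, hγ₂r, m₀, hγ₂f⟩, c₁, hc₁, hd₁⟩ := h₁₂
  obtain ⟨δ₂, δ₃, ⟨hδ₂m, hδ₂r, n₀, hδ₂f⟩, ⟨hδ₃m, hδ₃r, p₀, hδ₃f⟩, c₂, hc₂, hd₂⟩ := h₂₃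
  have hγ₂fin : ∀ x, {k : ℤ | γ₂ k = x}.Finite := fun x => (hγ₂f x).1
  have hδ₂fin : ∀ x, {k : ℤ | δ₂ k = x}.Finite := fun x => (hδ₂f x).1
  set N : ℤ := (m₀ : ℤ) + (n₀ : ℤ) + 1 with hNdef
  have hNpos : 0 < N := by positivity
  set ρ : ℤ → ℝ := fun j => γ₂ (j / N) with hρdef
  have hρm : Monotone ρ := fun j j' h => hγ₂m (Int.ediv_le_ediv hNpos h)
  have hρr : Set.range ρ = Set.range γ₂ := by
    apply Set.Subset.antisymm
    · rintro _ ⟨j, rfl⟩; exact ⟨j / N, rfl⟩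
    · rintro _ ⟨k, rfl⟩
      exact ⟨N * k, by simp only [hρdef, Int.mul_ediv_cancel_left _ (by omega : N ≠ 0)]⟩
  have hρfc : ∀ x, {k : ℤ | ρ k = x}.Finite ∧ {k : ℤ | ρ k = x}.ncard ≤ (N * m₀).toNat :=
    fun x => SeqTri.rho_fiber_bound hγ₂m hNpos hγ₂f x
  have hρfin : ∀ x, {k : ℤ | ρ k = x}.Finite := fun x => (hρfc x).1
  -- fiber data over a value of ρ
  have key : ∀ j : ℤ,
      sSup {k : ℤ | ρ k = ρ j} - sInf {k : ℤ | ρ k = ρ j}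
        = N * sSup {k : ℤ | γ₂ k = ρ j} + (N - 1) - N * sInf {k : ℤ | γ₂ k = ρ j}
      ∧ sInf {k : ℤ | γ₂ k = ρ j} ≤ sSup {k : ℤ | γ₂ k = ρ j} := by
    intro j
    have hsr : ρ j ∈ Set.range γ₂ := hρr ▸ Set.mem_range_self j
    set a := sInf {k : ℤ | γ₂ k = ρ j} with ha
    set b := sSup {k : ℤ | γ₂ k = ρ j} with hb
    obtain ⟨k₀, hk₀⟩ := hsr
    have hne : {k : ℤ | γ₂ k = ρ j}.Nonempty := ⟨k₀, hk₀⟩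
    have hab : a ≤ b := csInf_le_csSup hne (hγ₂fin _).bddBelow (hγ₂fin _).bddAbove
    have heq : {k : ℤ | ρ k = ρ j} = Set.Icc (N * a) (N * b + (N - 1)) :=
      SeqTri.rho_fiber_eq hγ₂m hNpos hγ₂fin ⟨k₀, hk₀⟩
    have hle : N * a ≤ N * b + (N - 1) := by nlinarith
    rw [heq, csSup_Icc hle, csInf_Icc hle]
    exact ⟨rfl, hab⟩
  have hspread_γ : ∀ j : ℤ,
      sSup {k : ℤ | γ₂ k = ρ j} - sInf {k : ℤ | γ₂ k = ρ j}
        ≤ sSup {k : ℤ | ρ k = ρ j} - sInf {k : ℤ | ρ k = ρ j} := by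
    intro j
    obtain ⟨he, hab⟩ := key j
    rw [he]
    nlinarith
  have hspread_δ : ∀ j : ℤ,
      sSup {k : ℤ | δ₂ k = ρ j} - sInf {k : ℤ | δ₂ k = ρ j}
        ≤ sSup {k : ℤ | ρ k = ρ j} - sInf {k : ℤ | ρ k = ρ j} := by
    intro j
    obtain ⟨he, hab⟩ := key j
    rw [he]
    have hsr : ρ j ∈ Set.range δ₂ := by
      rw [hδ₂r, ← hγ₂r]; exact hρr ▸ Set.mem_range_self j
    obtain ⟨k₀, hk₀⟩ := hsr
    have hne : {k : ℤ | δ₂ k = ρ j}.Nonempty := ⟨k₀, hk₀⟩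
    set a' := sInf {k : ℤ | δ₂ k = ρ j} with ha'
    set b' := sSup {k : ℤ | δ₂ k = ρ j} with hb'
    have hab' : a' ≤ b' := csInf_le_csSup hne (hδ₂fin _).bddBelow (hδ₂fin _).bddAbove
    have hcard : {k : ℤ | δ₂ k = ρ j}.ncard = (b' + 1 - a').toNat := by
      rw [SeqTri.fiber_eq_Icc hδ₂m (hδ₂fin _) hne, ← ha', ← hb', SeqTri.ncard_Icc]
    have hn : b' + 1 - a' ≤ (n₀ : ℤ) := by
      have := (hδ₂f (ρ j)).2
      rw [hcard] at this
      omega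
    have hab := (key j).2
    nlinarith
  obtain ⟨u, hum, hus, huc⟩ :=
    SeqTri.exists_reindex γ₂ ρ hγ₂m hρm hρr hγ₂fin hρfin hspread_γ
  obtain ⟨v, hvm, hvs, hvc⟩ :=
    SeqTri.exists_reindex δ₂ ρ hδ₂m hρm (hρr.trans (hγ₂r.trans hδ₂r.symm)) hδ₂fin hρfin hspread_δ
  refine ⟨γ₁ ∘ u, δ₃ ∘ v,
    ⟨hγ₁m.comp hum, ?_, m₁ * (N * m₀).toNat, fun x => SeqTri.comp_fiber_bound huc hγ₁f hρfc x⟩,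
    ⟨hδ₃m.comp hvm, ?_, p₀ * (N * m₀).toNat, fun x => SeqTri.comp_fiber_bound hvc hδ₃f hρfc x⟩,
    c₁ + c₂, add_lt_add hc₁ hc₂, ?_⟩
  · rw [Set.range_comp, hus.range_eq, Set.image_univ, hγ₁r]
  · rw [Set.range_comp, hvs.range_eq, Set.image_univ, hδ₃r]
  · intro i
    have e : γ₂ (u i) = δ₂ (v i) := (huc i).trans (hvc i).symm
    calc |(γ₁ ∘ u) i - (δ₃ ∘ v) i|
        = |(γ₁ (u i) - γ₂ (u i)) + (δ₂ (v i) - δ₃ (v i))| := by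
          simp only [Function.comp_apply]
          rw [show γ₁ (u i) - δ₃ (v i) = (γ₁ (u i) - γ₂ (u i)) + (δ₂ (v i) - δ₃ (v i)) by
            rw [e]; ring]
      _ ≤ |γ₁ (u i) - γ₂ (u i)| + |δ₂ (v i) - δ₃ (v i)| := abs_add_le _ _
      _ ≤ c₁ + c₂ := add_le_add (hd₁ _) (hd₂ _)
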